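/- (Special case of Sylvester's identity) With the notation $c_{i,j}^k$ for bordered determinants of a matrix $C$ as above (and $c_{i,j}^{k+1} := 0$ when $k = \min(i,j)$), for all $0 \le k \le i,j$: $c_{k,k}^k c_{i,j}^k - c_{i,k}^k c_{k,j}^k = c_{k-1,k-1}^{k-1} c_{i,j}^{k+1}$. -/

import Mathlib

/-- The bordered determinant `c_{i,j}^k`: the determinant of the `(k+1) × (k+1)`
matrix formed from rows `0, …, k-1, i` and columns `0, …, k-1, j` of `C`. -/
noncomputable def bord (n : ℕ) (C : Matrix (Fin (n + 1)) (Fin (n + 1)) ℝ) (k : ℕ)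
    (i j : Fin (n + 1)) : ℝ :=
  (Matrix.of fun r s : Fin (k + 1) =>
    C (if h : (r : ℕ) < k ∧ (r : ℕ) ≤ n then ⟨(r : ℕ), by omega⟩ else i)
      (if h : (s : ℕ) < k ∧ (s : ℕ) ≤ n then ⟨(s : ℕ), by omega⟩ else j)).det

def finClamp (n k : ℕ) : Fin (n + 1) := ⟨min k n, by omega⟩

/-- The leading principal minor `c_{k,k}^k` of `C`. -/
noncomputable def pMinor (n : ℕ) (C : Matrix (Fin (n + 1)) (Fin (n + 1)) ℝ) (k : ℕ) : ℝ :=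
  bord n C k (finClamp n k) (finClamp n k)

/-- `c_{k-1,k-1}^{k-1}`, with the convention `c_{-1,-1}^{-1} = 1`. -/
noncomputable def pMinorPred (n : ℕ) (C : Matrix (Fin (n + 1)) (Fin (n + 1)) ℝ) : ℕ → ℝ
  | 0 => 1
  | k + 1 => pMinor n C k

open Matrix

private noncomputable def NN {m : ℕ} (A : Matrix (Fin m) (Fin m) ℝ) (B : Matrix (Fin m) (Fin 2) ℝ)
    (Cm : Matrix (Fin 2) (Fin m) ℝ) (D : Matrix (Fin 2) (Fin 2) ℝ) (x y : Fin 2) :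
    Matrix (Fin m ⊕ Fin 1) (Fin m ⊕ Fin 1) ℝ :=
  fromBlocks A (fun r _ => B r y) (fun _ s => Cm x s) (fun _ _ => D x y)

private lemma key_inv {m : ℕ} (A : Matrix (Fin m) (Fin m) ℝ) (hA : IsUnit A.det)
    (B : Matrix (Fin m) (Fin 2) ℝ) (Cm : Matrix (Fin 2) (Fin m) ℝ)
    (D : Matrix (Fin 2) (Fin 2) ℝ) :
    (NN A B Cm D 0 0).det * (NN A B Cm D 1 1).det
      - (NN A B Cm D 1 0).det * (NN A B Cm D 0 1).det
      = A.det * (fromBlocks A B Cm D).det := by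
  haveI : Invertible A := A.invertibleOfIsUnitDet hA
  have hsm : ∀ x y : Fin 2,
      (NN A B Cm D x y).det = A.det * (D - Cm * ⅟A * B) x y := by
    intro x y
    rw [NN]
    refine (det_fromBlocks₁₁ _ _ _ _).trans ?_
    congr 1
    rw [det_unique]
    simp only [Matrix.sub_apply, Matrix.mul_apply, Finset.sum_mul, Finset.mul_sum]
    change D x y - ∑ j, (∑ i, Cm x i * ⅟A i j) * B j y = _
    simp only [Finset.sum_mul]
  rw [hsm, hsm, hsm, hsm, det_fromBlocks₁₁, det_fin_two]
  ring

private lemma det_add_smul_one_eq {m : ℕ} (A : Matrix (Fin m) (Fin m) ℝ) (ε : ℝ) :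
    (A + ε • 1).det = ((-A).charpoly).eval ε := by
  rw [Matrix.charpoly, ← Polynomial.coe_evalRingHom, RingHom.map_det]
  congr 1
  ext i j
  by_cases h : i = j
  · subst h
    simp [charmatrix_apply_eq, Matrix.add_apply, Matrix.smul_apply, Matrix.one_apply]
    ring
  · simp [charmatrix_apply_ne _ _ _ h, Matrix.add_apply, Matrix.smul_apply,
      Matrix.one_apply_ne h]

private lemma key {m : ℕ} (A : Matrix (Fin m) (Fin m) ℝ)
    (B : Matrix (Fin m) (Fin 2) ℝ) (Cm : Matrix (Fin 2) (Fin m) ℝ)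
    (D : Matrix (Fin 2) (Fin 2) ℝ) :
    (NN A B Cm D 0 0).det * (NN A B Cm D 1 1).det
      - (NN A B Cm D 1 0).det * (NN A B Cm D 0 1).det
      = A.det * (fromBlocks A B Cm D).det := by
  set f : ℝ → ℝ := fun ε =>
    ((NN (A + ε • 1) B Cm D 0 0).det * (NN (A + ε • 1) B Cm D 1 1).det
      - (NN (A + ε • 1) B Cm D 1 0).det * (NN (A + ε • 1) B Cm D 0 1).det)
      - (A + ε • 1).det * (fromBlocks (A + ε • 1) B Cm D).det with hf
  have hAc : Continuous fun ε : ℝ => A + ε • (1 : Matrix (Fin m) (Fin m) ℝ) :=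
    continuous_const.add (continuous_id.smul continuous_const)
  have hN : ∀ x y : Fin 2, Continuous fun ε : ℝ => (NN (A + ε • 1) B Cm D x y).det := by
    intro x y
    exact (hAc.matrix_fromBlocks continuous_const continuous_const continuous_const).matrix_det
  have hcont : Continuous f :=
    (((hN 0 0).mul (hN 1 1)).sub ((hN 1 0).mul (hN 0 1))).sub
      (hAc.matrix_det.mul
        ((hAc.matrix_fromBlocks continuous_const continuous_const
          continuous_const).matrix_det))
  have hS : {ε : ℝ | (A + ε • 1).det = 0}.Finite := by
    apply Set.Finite.subset (Polynomial.finite_setOf_isRoot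
      (p := (-A).charpoly) (Matrix.charpoly_monic _).ne_zero)
    intro ε hε
    simp only [Set.mem_setOf_eq, det_add_smul_one_eq] at hε
    exact hε
  have hdense : Dense {ε : ℝ | (A + ε • 1).det = 0}ᶜ := hS.countable.dense_compl ℝ
  have hzero : f = fun _ => 0 := by
    apply hcont.ext_on hdense continuous_const
    intro ε hε
    have hu : IsUnit (A + ε • 1).det := isUnit_iff_ne_zero.mpr hε
    have := key_inv (A + ε • 1) hu B Cm D
    simp only [f, this, sub_self]
  have h0 := congrFun hzero 0
  simp only [f, zero_smul, add_zero] at h0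
  linarith [h0]

private lemma bord_eq (n : ℕ) (C : Matrix (Fin (n + 1)) (Fin (n + 1)) ℝ) (k : ℕ) (hk : k ≤ n)
    (i j : Fin (n + 1)) :
    bord n C k i j
      = (fromBlocks (C.submatrix (fun r : Fin k => (⟨(r : ℕ), by omega⟩ : Fin (n + 1)))
            (fun s : Fin k => (⟨(s : ℕ), by omega⟩ : Fin (n + 1))))
          (fun (r : Fin k) (_ : Fin 1) => C ⟨(r : ℕ), by omega⟩ j)
          (fun (_ : Fin 1) (s : Fin k) => C i ⟨(s : ℕ), by omega⟩)
          (fun _ _ => C i j)).det := by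
  rw [bord, ← Matrix.det_submatrix_equiv_self finSumFinEquiv]
  congr 1
  ext r s
  rcases r with r | r <;> rcases s with s | s <;>
    simp only [Matrix.submatrix_apply, finSumFinEquiv_apply_left, finSumFinEquiv_apply_right,
      Matrix.of_apply, fromBlocks_apply₁₁, fromBlocks_apply₁₂, fromBlocks_apply₂₁,
      fromBlocks_apply₂₂, Fin.coe_castAdd, Fin.coe_natAdd] <;>
    [ rw [dif_pos (by omega), dif_pos (by omega)];
      rw [dif_pos (by omega), dif_neg (by omega)];
      rw [dif_neg (by omega), dif_pos (by omega)];
      rw [dif_neg (by omega), dif_neg (by omega)]] <;> rfl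

set_option maxHeartbeats 1000000 in
private lemma bord_succ_eq (n : ℕ) (C : Matrix (Fin (n + 1)) (Fin (n + 1)) ℝ) (k : ℕ)
    (hk : k ≤ n) (i j : Fin (n + 1)) :
    bord n C (k + 1) i j
      = (fromBlocks (C.submatrix (fun r : Fin k => (⟨(r : ℕ), by omega⟩ : Fin (n + 1)))
            (fun s : Fin k => (⟨(s : ℕ), by omega⟩ : Fin (n + 1))))
          (fun (r : Fin k) (t : Fin 2) =>
            C ⟨(r : ℕ), by omega⟩ (![(⟨k, by omega⟩ : Fin (n + 1)), j] t))
          (fun (t : Fin 2) (s : Fin k) =>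
            C (![(⟨k, by omega⟩ : Fin (n + 1)), i] t) ⟨(s : ℕ), by omega⟩)
          (fun (t u : Fin 2) =>
            C (![(⟨k, by omega⟩ : Fin (n + 1)), i] t)
              (![(⟨k, by omega⟩ : Fin (n + 1)), j] u))).det := by
  rw [bord, ← Matrix.det_submatrix_equiv_self
    (finSumFinEquiv : Fin k ⊕ Fin 2 ≃ Fin (k + 1 + 1))]
  congr 1
  ext r s
  rcases r with r | r <;> rcases s with s | s
  · simp only [Matrix.submatrix_apply, finSumFinEquiv_apply_left, Matrix.of_apply,
      fromBlocks_apply₁₁, Fin.coe_castAdd]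
    rw [dif_pos (by omega), dif_pos (by omega)]
    rfl
  · fin_cases s <;>
      simp only [Matrix.submatrix_apply, finSumFinEquiv_apply_left, finSumFinEquiv_apply_right,
        Matrix.of_apply, fromBlocks_apply₁₂, Fin.coe_castAdd, Fin.coe_natAdd, Fin.isValue,
        Matrix.cons_val_zero, Matrix.cons_val_one, Matrix.head_cons]
    · rw [dif_pos (by omega), dif_pos (by omega)]
      congr 1 <;> first | rfl | (apply Fin.ext; simp)
    · rw [dif_pos (by omega), dif_neg (by omega)]
      congr 1 <;> first | rfl | (apply Fin.ext; simp)
  · fin_cases r <;>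
      simp only [Matrix.submatrix_apply, finSumFinEquiv_apply_left, finSumFinEquiv_apply_right,
        Matrix.of_apply, fromBlocks_apply₂₁, Fin.coe_castAdd, Fin.coe_natAdd, Fin.isValue,
        Matrix.cons_val_zero, Matrix.cons_val_one, Matrix.head_cons]
    · rw [dif_pos (by omega), dif_pos (by omega)]
      congr 1 <;> first | rfl | (apply Fin.ext; simp)
    · rw [dif_neg (by omega), dif_pos (by omega)]
      congr 1 <;> first | rfl | (apply Fin.ext; simp)
  · fin_cases r <;> fin_cases s <;>
      simp only [Matrix.submatrix_apply, finSumFinEquiv_apply_right,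
        Matrix.of_apply, fromBlocks_apply₂₂, Fin.coe_natAdd, Fin.isValue,
        Matrix.cons_val_zero, Matrix.cons_val_one, Matrix.head_cons]
    · rw [dif_pos (by omega), dif_pos (by omega)]
      congr 1 <;> first | rfl | (apply Fin.ext; simp)
    · rw [dif_pos (by omega), dif_neg (by omega)]
      congr 1 <;> first | rfl | (apply Fin.ext; simp)
    · rw [dif_neg (by omega), dif_pos (by omega)]
      congr 1 <;> first | rfl | (apply Fin.ext; simp)
    · rw [dif_neg (by omega), dif_neg (by omega)]
      congr 1 <;> first | rfl | (apply Fin.ext; simp)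

private lemma pMinorPred_eq (n : ℕ) (C : Matrix (Fin (n + 1)) (Fin (n + 1)) ℝ) (k : ℕ)
    (hk : k ≤ n) :
    pMinorPred n C k
      = (C.submatrix (fun r : Fin k => (⟨(r : ℕ), by omega⟩ : Fin (n + 1)))
          (fun s : Fin k => (⟨(s : ℕ), by omega⟩ : Fin (n + 1)))).det := by
  cases k with
  | zero => simp [pMinorPred, Matrix.det_isEmpty]
  | succ m =>
    show pMinor n C m = _
    rw [pMinor, bord]
    congr 1
    ext r s
    rw [Matrix.of_apply, Matrix.submatrix_apply]
    congr 1 <;>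
    · split_ifs with h
      · rfl
      · apply Fin.ext
        simp only [finClamp]
        omega

private lemma bord_succ_zero_row (n : ℕ) (C : Matrix (Fin (n + 1)) (Fin (n + 1)) ℝ) (k : ℕ)
    (hk : k ≤ n) (i j : Fin (n + 1)) (hi : (i : ℕ) = k) :
    bord n C (k + 1) i j = 0 := by
  have hik : i = ⟨k, by omega⟩ := Fin.ext hi
  apply Matrix.det_zero_of_row_eq
    (i := (⟨k, by omega⟩ : Fin (k + 1 + 1))) (j := ⟨k + 1, by omega⟩)
  · simp [Fin.ext_iff]
  · funext s
    simp only [Matrix.of_apply]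
    congr 1
    rw [dif_pos (⟨Nat.lt_succ_self k, hk⟩ : (k : ℕ) < k + 1 ∧ k ≤ n)]
    rw [dif_neg (fun h => absurd h.1 (lt_irrefl _))]
    exact hik.symm

private lemma bord_succ_zero_col (n : ℕ) (C : Matrix (Fin (n + 1)) (Fin (n + 1)) ℝ) (k : ℕ)
    (hk : k ≤ n) (i j : Fin (n + 1)) (hj : (j : ℕ) = k) :
    bord n C (k + 1) i j = 0 := by
  have hjk : j = ⟨k, by omega⟩ := Fin.ext hj
  apply Matrix.det_zero_of_column_eq
    (i := (⟨k, by omega⟩ : Fin (k + 1 + 1))) (j := ⟨k + 1, by omega⟩)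
  · simp [Fin.ext_iff]
  · intro r
    simp only [Matrix.of_apply]
    congr 1
    rw [dif_pos (⟨Nat.lt_succ_self k, hk⟩ : (k : ℕ) < k + 1 ∧ k ≤ n)]
    rw [dif_neg (fun h => absurd h.1 (lt_irrefl _))]
    exact hjk.symm

set_option maxHeartbeats 1000000 in
private lemma main_eq (n : ℕ) (C : Matrix (Fin (n + 1)) (Fin (n + 1)) ℝ)
    (k : ℕ) (hk : k ≤ n) (i j : Fin (n + 1)) :
    pMinor n C k * bord n C k i j
      - bord n C k i (finClamp n k) * bord n C k (finClamp n k) j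
      = pMinorPred n C k * bord n C (k + 1) i j := by
  have hclamp : finClamp n k = (⟨k, by omega⟩ : Fin (n + 1)) := by
    apply Fin.ext
    simp only [finClamp]
    omega
  rw [pMinor, hclamp,
    bord_eq n C k hk (⟨k, by omega⟩ : Fin (n + 1)) (⟨k, by omega⟩ : Fin (n + 1)),
    bord_eq n C k hk i j,
    bord_eq n C k hk i (⟨k, by omega⟩ : Fin (n + 1)),
    bord_eq n C k hk (⟨k, by omega⟩ : Fin (n + 1)) j,
    bord_succ_eq n C k hk i j,
    pMinorPred_eq n C k hk]
  exact key
    (C.submatrix (fun r : Fin k => (⟨(r : ℕ), by omega⟩ : Fin (n + 1)))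
      (fun s : Fin k => (⟨(s : ℕ), by omega⟩ : Fin (n + 1))))
    (fun (r : Fin k) (t : Fin 2) =>
      C ⟨(r : ℕ), by omega⟩ (![(⟨k, by omega⟩ : Fin (n + 1)), j] t))
    (fun (t : Fin 2) (s : Fin k) =>
      C (![(⟨k, by omega⟩ : Fin (n + 1)), i] t) ⟨(s : ℕ), by omega⟩)
    (fun (t u : Fin 2) =>
      C (![(⟨k, by omega⟩ : Fin (n + 1)), i] t) (![(⟨k, by omega⟩ : Fin (n + 1)), j] u))

/-- A special case of Sylvester's determinant identity. -/
theorem stmt_13 (n : ℕ) (C : Matrix (Fin (n + 1)) (Fin (n + 1)) ℝ)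
    (k : ℕ) (hk : k ≤ n) (i j : Fin (n + 1)) (hki : k ≤ (i : ℕ)) (hkj : k ≤ (j : ℕ)) :
    pMinor n C k * bord n C k i j - bord n C k i (finClamp n k) * bord n C k (finClamp n k) j
      = pMinorPred n C k *
          (if k = min (i : ℕ) (j : ℕ) then 0 else bord n C (k + 1) i j) := by
  by_cases hmin : k = min (i : ℕ) (j : ℕ)
  · rw [if_pos hmin, mul_zero, main_eq n C k hk i j]
    have : (i : ℕ) = k ∨ (j : ℕ) = k := by omega
    rcases this with h | h
    · rw [bord_succ_zero_row n C k hk i j h, mul_zero]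
    · rw [bord_succ_zero_col n C k hk i j h, mul_zero]
  · rw [if_neg hmin]
    exact main_eq n C k hk i j
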